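/- Let E be a real inner product space and let f, g ∈ E be linearly independent, with r = ‖f‖, s = ‖g‖, and α ∈ (0, π) the angle between f and g (so cos α = ⟨f, g⟩/(r·s)). For τ ∈ (0, 1], set t = s/(r·sin α·cot(τα) − r·cos α + s). Then 0 < t ≤ 1 and the angle between g and the vector t·f + (1−t)·g equals τα. -/

import Mathlib

set_option maxHeartbeats 1000000 in
/-- Parametrizing a segment by angle (claim in Proposition `prop:a-ALH`): let `f, g` be
linearly independent vectors in a real inner ℝ product space, `r = ‖f‖`, `s = ‖g‖`, and let
`α` be the angle between `f` and `g`. For `τ ∈ (0,1]`, set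
`t = s / (r sin α · cot(τα) − r cos α + s)`. Then `0 < t ≤ 1` and the angle between `g`
and `t•f + (1−t)•g` equals `τα`. -/
theorem angle_combination_eq (E : Type*) [NormedAddCommGroup E] [InnerProductSpace ℝ E]
    (f g : E) (hli : LinearIndependent ℝ ![f, g]) (τ : ℝ) (hτ0 : 0 < τ) (hτ1 : τ ≤ 1) :
    let r : ℝ := ‖f‖
    let s : ℝ := ‖g‖
    let α : ℝ := Real.arccos ((inner ℝ f g : ℝ) / (r * s))
    let t : ℝ := s / (r * Real.sin α * Real.cot (τ * α) - r * Real.cos α + s)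
    0 < t ∧ t ≤ 1 ∧
      Real.arccos ((inner ℝ g (t • f + (1 - t) • g) : ℝ) / (‖g‖ * ‖t • f + (1 - t) • g‖))
        = τ * α := by
  intro r s α t
  have hrdef : r = ‖f‖ := rfl
  have hsdef : s = ‖g‖ := rfl
  have hαdef : α = Real.arccos ((inner ℝ f g : ℝ) / (r * s)) := rfl
  have htdef : t = s / (r * Real.sin α * Real.cot (τ * α) - r * Real.cos α + s) := rfl
  clear_value t α s r
  have hpair := LinearIndependent.pair_iff.mp hli
  have hf0 : f ≠ 0 := by
    intro h; have := (hpair 1 0 (by simp [h])).1; norm_num at this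
  have hg0 : g ≠ 0 := by
    intro h; have := (hpair 0 1 (by simp [h])).2; norm_num at this
  have hr : (0:ℝ) < r := hrdef ▸ norm_pos_iff.mpr hf0
  have hs : (0:ℝ) < s := hsdef ▸ norm_pos_iff.mpr hg0
  have hCS1 : (inner ℝ f g : ℝ) < r * s := by
    rw [hrdef, hsdef]
    refine inner_lt_norm_mul_iff_real.mpr ?_
    intro h
    have := (hpair ‖g‖ (-‖f‖) (by rw [neg_smul, h]; simp)).1
    exact hg0 (norm_eq_zero.mp this)
  have hCS2 : -(r * s) < (inner ℝ f g : ℝ) := by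
    have hlt : (inner ℝ (-f) g : ℝ) < ‖(-f)‖ * ‖g‖ := by
      refine inner_lt_norm_mul_iff_real.mpr ?_
      intro h
      simp only [norm_neg, smul_neg] at h
      have h' : ‖g‖ • f = -(‖f‖ • g) := by rw [← h, neg_neg]
      have := (hpair ‖g‖ ‖f‖ (by rw [h']; simp)).1
      exact hg0 (norm_eq_zero.mp this)
    simp only [inner_neg_left, norm_neg] at hlt
    rw [hrdef, hsdef]; linarith
  set c : ℝ := (inner ℝ f g : ℝ) / (r * s) with hc
  have hrs : 0 < r * s := mul_pos hr hs
  have hc1 : c < 1 := by rw [hc, div_lt_one hrs]; exact hCS1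
  have hc2 : -1 < c := by rw [hc, lt_div_iff₀ hrs]; linarith
  have hα0 : 0 < α := hαdef ▸ Real.arccos_pos.mpr hc1
  have hαπ : α < Real.pi := by
    rw [hαdef]
    refine lt_of_le_of_ne (Real.arccos_le_pi c) (fun h => ?_)
    have := Real.arccos_eq_pi.mp h; linarith
  have hcos : Real.cos α = c := hαdef ▸ Real.cos_arccos (by linarith) (by linarith)
  have hsinα : 0 < Real.sin α := Real.sin_pos_of_pos_of_lt_pi hα0 hαπ
  have hτα0 : 0 < τ * α := mul_pos hτ0 hα0
  have hταα : τ * α ≤ α := by nlinarith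
  have hταπ : τ * α < Real.pi := lt_of_le_of_lt hταα hαπ
  have hsinτα : 0 < Real.sin (τ * α) := Real.sin_pos_of_pos_of_lt_pi hτα0 hταπ
  have hinnerfg : (inner ℝ f g : ℝ) = r * s * Real.cos α := by
    rw [hcos, hc]; field_simp
  have hcotdef : Real.cot (τ * α) = Real.cos (τ * α) / Real.sin (τ * α) :=
    Real.cot_eq_cos_div_sin _
  have hcot_ge : Real.cos α / Real.sin α ≤ Real.cot (τ * α) := by
    rw [hcotdef, div_le_div_iff₀ hsinα hsinτα]
    have h1 : 0 ≤ Real.sin (α - τ * α) :=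
      Real.sin_nonneg_of_nonneg_of_le_pi (by linarith) (by linarith)
    rw [Real.sin_sub] at h1
    linarith
  set D : ℝ := r * Real.sin α * Real.cot (τ * α) - r * Real.cos α + s with hD
  have hDs : s ≤ D := by
    have h2 : r * Real.sin α * (Real.cos α / Real.sin α) ≤
        r * Real.sin α * Real.cot (τ * α) :=
      mul_le_mul_of_nonneg_left hcot_ge (le_of_lt (mul_pos hr hsinα))
    have h3 : r * Real.sin α * (Real.cos α / Real.sin α) = r * Real.cos α := by
      field_simp
    rw [hD]; linarith [h2, h3]
  have hDpos : 0 < D := lt_of_lt_of_le hs hDs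
  have ht : t = s / D := htdef
  have ht0 : 0 < t := ht ▸ div_pos hs hDpos
  have ht1 : t ≤ 1 := ht ▸ (div_le_one hDpos).mpr hDs
  refine ⟨ht0, ht1, ?_⟩
  have htD : t * D = s := by rw [ht]; field_simp
  rw [hD] at htD
  set A : ℝ := t * r * Real.cos α + (1 - t) * s with hA
  set u : ℝ := t * r * Real.sin α with hu
  have hAeq : A = u * Real.cot (τ * α) := by
    rw [hA, hu]; linear_combination -htD
  have hupos : 0 < u := mul_pos (mul_pos ht0 hr) hsinα
  set h : E := t • f + (1 - t) • g with hh
  have hff : (inner ℝ f f : ℝ) = r * r := by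
    rw [real_inner_self_eq_norm_mul_norm, ← hrdef]
  have hgg : (inner ℝ g g : ℝ) = s * s := by
    rw [real_inner_self_eq_norm_mul_norm, ← hsdef]
  have hgf : (inner ℝ g f : ℝ) = r * s * Real.cos α := (real_inner_comm f g).trans hinnerfg
  have hinner : (inner ℝ g h : ℝ) = s * A := by
    have h1 : (inner ℝ g h : ℝ) = t * (inner ℝ g f : ℝ) + (1 - t) * (inner ℝ g g : ℝ) := by
      rw [hh, inner_add_right, real_inner_smul_right, real_inner_smul_right]
    rw [h1, hgf, hgg, hA]
    ring
  have hnormsq : ‖h‖ ^ 2 = u ^ 2 + A ^ 2 := by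
    have hexp : ‖h‖ ^ 2 = t ^ 2 * r ^ 2 + 2 * t * (1 - t) * (r * s * Real.cos α)
        + (1 - t) ^ 2 * s ^ 2 := by
      rw [hh, ← real_inner_self_eq_norm_sq, real_inner_add_add_self]
      simp only [real_inner_smul_left, real_inner_smul_right]
      rw [hff, hgg, hinnerfg]
      ring
    rw [hexp, hu, hA]
    linear_combination (-(t ^ 2 * r ^ 2)) * Real.sin_sq_add_cos_sq α
  have hnorm : ‖h‖ = u / Real.sin (τ * α) := by
    have h2 : ‖h‖ ^ 2 = (u / Real.sin (τ * α)) ^ 2 := by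
      rw [hnormsq, hAeq, hcotdef]
      field_simp
      linear_combination Real.sin_sq_add_cos_sq (τ * α)
    have h3 : 0 ≤ u / Real.sin (τ * α) := le_of_lt (div_pos hupos hsinτα)
    calc ‖h‖ = Real.sqrt (‖h‖ ^ 2) := (Real.sqrt_sq (norm_nonneg h)).symm
      _ = Real.sqrt ((u / Real.sin (τ * α)) ^ 2) := by rw [h2]
      _ = u / Real.sin (τ * α) := Real.sqrt_sq h3
  have hratio : (inner ℝ g h : ℝ) / (‖g‖ * ‖h‖) = Real.cos (τ * α) := by
    rw [hinner, hnorm, hAeq, hcotdef, ← hsdef]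
    field_simp
  rw [hratio]
  exact Real.arccos_cos (le_of_lt hτα0) (le_of_lt hταπ)
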